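/- Let G = G(d,e,k) be a group of squarefree order n = d·e and let x = [σ^a τ, θ^c φ_s] ∈ Hol(G). Then the cyclic subgroup ⟨x⟩ of Hol(G) acts transitively on G if and only if the cyclic subgroup ⟨x^d⟩ acts transitively on the subgroup ⟨σ⟩ of G. -/

import Mathlib

/-- The holomorph `Hol(G) = G ⋊ Aut(G)`. -/
abbrev Hol (G : Type*) [Group G] : Type _ :=
  SemidirectProduct G (MulAut G) (MonoidHom.id (MulAut G))

/-- **Lemma (transitivity criterion).** Let `G = G(d,e,k)` of squarefree order `n = d·e`
and let `x = [σ^a τ, θ^c φ_u] ∈ Hol(G)`. Then `⟨x⟩` acts transitively on `G` (via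
`[α,ψ]·β = α·ψ(β)`) if and only if `⟨x^d⟩` acts transitively on the subgroup `⟨σ⟩`. -/
theorem transitive_iff_power_transitive (d e k : ℕ) (hd : 0 < d) (he : 0 < e) (hk : 0 < k)
    (hcop : Nat.Coprime d e) (hord : orderOf (k : ZMod e) = d)
    (hsf : Squarefree (d * e))
    (G : Type) [Group G] (σ τ : G)
    (hσ : orderOf σ = e) (hτ : orderOf τ = d)
    (hrel : τ * σ * τ⁻¹ = σ ^ k) (hgen : Subgroup.closure {σ, τ} = ⊤)
    (z g : ℕ) (hz : z = Nat.gcd e (k - 1)) (hg : g = e / z)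
    (θ : MulAut G) (hθσ : θ σ = σ) (hθτ : θ τ = σ ^ z * τ)
    (Φ : (ZMod e)ˣ → MulAut G)
    (hΦ : ∀ u : (ZMod e)ˣ, Φ u σ = σ ^ ((u : ZMod e)).val ∧ Φ u τ = τ)
    (a c : ℕ) (u : (ZMod e)ˣ)
    (x : Hol G) (hx : x = ⟨σ ^ a * τ, θ ^ c * Φ u⟩) :
    (∀ w y : G, ∃ h ∈ Subgroup.zpowers x, h.left * h.right w = y) ↔
      (∀ w ∈ Subgroup.zpowers σ, ∀ y ∈ Subgroup.zpowers σ,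
        ∃ h ∈ Subgroup.zpowers (x ^ d), h.left * h.right w = y) := by
  have hτd1 : τ ^ d = 1 := hτ ▸ pow_orderOf_eq_one τ
  have hσe1 : σ ^ e = 1 := hσ ▸ pow_orderOf_eq_one σ
  set N := Subgroup.zpowers σ with hNdef
  -- `k * k^(d-1) ≡ 1 [MOD e]`
  have hkd : (k : ZMod e) ^ d = 1 := by
    have := pow_orderOf_eq_one (k : ZMod e); rwa [hord] at this
  have hmod : k * k ^ (d - 1) ≡ 1 [MOD e] := by
    have h1 : k * k ^ (d - 1) = k ^ d := by
      rw [← pow_succ']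
      congr 1
      omega
    rw [h1]
    have : ((k ^ d : ℕ) : ZMod e) = ((1 : ℕ) : ZMod e) := by push_cast; simpa using hkd
    exact (ZMod.natCast_eq_natCast_iff _ _ _).mp this
  -- conjugation facts
  have hconjt0 : τ * σ ^ (k ^ (d - 1)) * τ⁻¹ = σ := by
    have h1 : τ * σ ^ (k ^ (d - 1)) * τ⁻¹ = (τ * σ * τ⁻¹) ^ (k ^ (d - 1)) := by
      rw [conj_pow]
    rw [h1, hrel, ← pow_mul]
    have : σ ^ (k * k ^ (d - 1)) = σ ^ 1 := by
      rw [pow_eq_pow_iff_modEq, hσ]; exact hmod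
    rw [this, pow_one]
  have hconjinv : τ⁻¹ * σ * τ = σ ^ (k ^ (d - 1)) := by
    conv_lhs => rw [← hconjt0]
    group
  -- normality of N
  have hτnorm : τ ∈ Subgroup.normalizer (N : Set G) := by
    rw [Subgroup.mem_normalizer_iff]
    intro h
    constructor
    · intro hh
      obtain ⟨t, rfl⟩ := Subgroup.mem_zpowers_iff.mp hh
      have : τ * σ ^ t * τ⁻¹ = (τ * σ * τ⁻¹) ^ t := by rw [conj_zpow]
      rw [this, hrel]
      exact Subgroup.zpow_mem _ (Subgroup.pow_mem _ (Subgroup.mem_zpowers σ) k) t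
    · intro hh
      obtain ⟨t, ht⟩ := Subgroup.mem_zpowers_iff.mp hh
      have h2 : h = τ⁻¹ * σ ^ t * τ := by
        rw [ht]; group
      have h3 : τ⁻¹ * σ ^ t * τ = (τ⁻¹ * σ * τ) ^ t := by
        have h4 := conj_zpow (i := t) (a := τ⁻¹) (b := σ)
        rw [inv_inv] at h4
        exact h4.symm
      rw [h2, h3, hconjinv]
      exact Subgroup.zpow_mem _ (Subgroup.pow_mem _ (Subgroup.mem_zpowers σ) _) t
  have hNtop : Subgroup.normalizer (N : Set G) = ⊤ := by
    rw [eq_top_iff, ← hgen, Subgroup.closure_le]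
    intro w hw
    rcases Set.mem_insert_iff.mp hw with h | h
    · rw [h]; exact Subgroup.le_normalizer (Subgroup.mem_zpowers σ)
    · rw [Set.mem_singleton_iff] at h; rw [h]; exact hτnorm
  haveI hNn : N.Normal := Subgroup.normalizer_eq_top_iff.mp hNtop
  let π : G →* G ⧸ N := QuotientGroup.mk' N
  have hπker : ∀ w : G, π w = 1 ↔ w ∈ N := fun w => QuotientGroup.eq_one_iff w
  have hπσ : π σ = 1 := (hπker σ).mpr (Subgroup.mem_zpowers σ)
  have hπσp : ∀ m : ℕ, π (σ ^ m) = 1 := by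
    intro m; rw [map_pow, hπσ, one_pow]
  -- θ^p fixes σ
  have hθcσ : ∀ p : ℕ, (θ ^ p) σ = σ := by
    intro p; induction p with
    | zero => simp
    | succ q ih => rw [pow_succ', MulAut.mul_apply, ih, hθσ]
  have hθcτ : ∀ p : ℕ, (θ ^ p) τ = σ ^ (p * z) * τ := by
    intro p; induction p with
    | zero => simp
    | succ q ih =>
      rw [pow_succ, MulAut.mul_apply, hθτ, map_mul, map_pow, hθcσ, ih]
      rw [← mul_assoc, ← pow_add]
      congr 2
      ring
  -- π ∘ ψ = π for ψ = θ^c * Φ u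
  have hψ : ∀ w : G, π ((θ ^ c * Φ u) w) = π w := by
    intro w
    have hw : w ∈ Subgroup.closure ({σ, τ} : Set G) := by rw [hgen]; trivial
    induction hw using Subgroup.closure_induction with
    | mem v hv =>
      rcases hv with rfl | hv
      · rw [MulAut.mul_apply, (hΦ u).1, map_pow, hθcσ, hπσp, hπσ]
      · rcases hv with rfl
        rw [MulAut.mul_apply, (hΦ u).2, hθcτ, map_mul, hπσp, one_mul]
    | one => simp
    | mul p q hp hq ihp ihq => rw [map_mul, map_mul, map_mul, ihp, ihq]
    | inv p hp ihp => rw [map_inv, map_inv, ihp, map_inv]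
  -- one-step action formula
  have hstep : ∀ w : G, π (x.left * x.right w) = π τ * π w := by
    intro w
    rw [hx]
    show π ((σ ^ a * τ) * (θ ^ c * Φ u) w) = π τ * π w
    rw [map_mul, map_mul, hπσp, one_mul, hψ]
  -- action multiplicativity
  have hactmul : ∀ (h₁ h₂ : Hol G) (w : G),
      (h₁ * h₂).left * (h₁ * h₂).right w = h₁.left * h₁.right (h₂.left * h₂.right w) := by
    intro h₁ h₂ w
    rw [SemidirectProduct.mul_left, SemidirectProduct.mul_right, MulAut.mul_apply, map_mul]
    simp [mul_assoc]
  have hactone : ∀ w : G, (1 : Hol G).left * (1 : Hol G).right w = w := by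
    intro w; simp
  -- key formula
  have key : ∀ (m : ℤ) (w : G), π ((x ^ m).left * (x ^ m).right w) = (π τ) ^ m * π w := by
    have hinv : ∀ v : G, π (x⁻¹.left * x⁻¹.right v) = (π τ)⁻¹ * π v := by
      intro v
      have h2 := hstep (x⁻¹.left * x⁻¹.right v)
      rw [← hactmul, mul_inv_cancel] at h2
      rw [hactone] at h2
      rw [h2]; group
    intro m
    induction m using Int.induction_on with
    | zero => intro w; simp [hactone]
    | succ i ih =>
      intro w
      have hpow : x ^ ((i : ℤ) + 1) = x ^ (i : ℤ) * x := by rw [zpow_add_one]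
      rw [hpow, hactmul, ih, hstep, zpow_add_one]
      group
    | pred i ih =>
      intro w
      have hpow : x ^ (-(i : ℤ) - 1) = x ^ (-(i : ℤ)) * x⁻¹ := by rw [zpow_sub_one]
      rw [hpow, hactmul, ih, hinv]
      rw [zpow_sub_one]
      group
  -- order of π τ is d
  have hπτord : orderOf (π τ) = d := by
    have hdvd1 : orderOf (π τ) ∣ d :=
      orderOf_dvd_of_pow_eq_one (by rw [← map_pow, hτd1, map_one])
    have hdvd2 : d ∣ orderOf (π τ) := by
      have h1 : π (τ ^ orderOf (π τ)) = 1 := by rw [map_pow, pow_orderOf_eq_one]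
      have h2 : τ ^ orderOf (π τ) ∈ N := (hπker _).mp h1
      obtain ⟨t, ht⟩ := Subgroup.mem_zpowers_iff.mp h2
      have h3 : (τ ^ orderOf (π τ)) ^ e = 1 := by
        rw [← ht, ← zpow_natCast, ← zpow_mul, mul_comm, zpow_mul, zpow_natCast, hσe1, one_zpow]
      have h4 : (τ ^ orderOf (π τ)) ^ d = 1 := by
        rw [← pow_mul, mul_comm, pow_mul, hτd1, one_pow]
      have h5 : orderOf (τ ^ orderOf (π τ)) ∣ Nat.gcd d e :=
        Nat.dvd_gcd (orderOf_dvd_of_pow_eq_one h4) (orderOf_dvd_of_pow_eq_one h3)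
      rw [hcop] at h5
      have h6 : τ ^ orderOf (π τ) = 1 := orderOf_eq_one_iff.mp (Nat.dvd_one.mp h5)
      exact hτ ▸ orderOf_dvd_of_pow_eq_one h6
    exact Nat.dvd_antisymm hdvd1 hdvd2
  -- every element of G/N is a power of π τ
  have hsurj : ∀ w : G, ∃ j : ℤ, π w = (π τ) ^ j := by
    intro w
    have hw : w ∈ Subgroup.closure ({σ, τ} : Set G) := by rw [hgen]; trivial
    induction hw using Subgroup.closure_induction with
    | mem v hv =>
      rcases hv with rfl | hv
      · exact ⟨0, by rw [hπσ]; simp⟩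
      · rcases hv with rfl; exact ⟨1, by simp⟩
    | one => exact ⟨0, by simp⟩
    | mul p q hp hq ihp ihq =>
      obtain ⟨j₁, hj₁⟩ := ihp; obtain ⟨j₂, hj₂⟩ := ihq
      exact ⟨j₁ + j₂, by rw [map_mul, hj₁, hj₂, zpow_add]⟩
    | inv p hp ihp =>
      obtain ⟨j, hj⟩ := ihp
      exact ⟨-j, by rw [map_inv, hj, zpow_neg]⟩
  have hzple : Subgroup.zpowers (x ^ d) ≤ Subgroup.zpowers x :=
    Subgroup.zpowers_le.mpr (Subgroup.pow_mem _ (Subgroup.mem_zpowers x) d)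
  constructor
  · -- forward
    intro H1 w hw y hy
    obtain ⟨h, hh, hact⟩ := H1 w y
    obtain ⟨m, rfl⟩ := Subgroup.mem_zpowers_iff.mp hh
    have hkey := key m w
    rw [hact] at hkey
    have hπw : π w = 1 := (hπker w).mpr hw
    have hπy : π y = 1 := (hπker y).mpr hy
    rw [hπw, hπy, mul_one] at hkey
    have hdm : ((d : ℤ)) ∣ m := by
      rw [← hπτord]
      exact orderOf_dvd_iff_zpow_eq_one.mpr hkey.symm
    obtain ⟨m', rfl⟩ := hdm
    refine ⟨(x ^ d) ^ m', Subgroup.zpow_mem _ (Subgroup.mem_zpowers _) m', ?_⟩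
    have : (x ^ d) ^ m' = x ^ ((d : ℤ) * m') := by
      rw [zpow_mul, zpow_natCast]
    rw [this]
    exact hact
  · -- backward
    intro H2
    have horb : ∀ v : G, ∃ h ∈ Subgroup.zpowers x, h.left * h.right 1 = v := by
      intro v
      obtain ⟨j, hj⟩ := hsurj v
      set v' := (x ^ (-j)).left * (x ^ (-j)).right v with hv'
      have hv'N : v' ∈ N := by
        rw [← hπker, hv', key (-j) v, hj]
        rw [zpow_neg, inv_mul_cancel]
      obtain ⟨h, hh, hact⟩ := H2 1 (one_mem N) v' hv'N
      refine ⟨x ^ j * h, mul_mem (Subgroup.zpow_mem _ (Subgroup.mem_zpowers x) j) (hzple hh), ?_⟩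
      rw [hactmul, hact, hv', ← hactmul]
      have hxx : x ^ j * x ^ (-j) = 1 := by
        rw [← zpow_add]; simp
      rw [hxx, hactone]
    intro w y
    obtain ⟨h₁, hh₁, ha₁⟩ := horb w
    obtain ⟨h₂, hh₂, ha₂⟩ := horb y
    refine ⟨h₂ * h₁⁻¹, mul_mem hh₂ (inv_mem hh₁), ?_⟩
    have hfix : h₁⁻¹.left * h₁⁻¹.right w = 1 := by
      rw [← ha₁, ← hactmul, inv_mul_cancel, hactone]
    rw [hactmul, hfix, ha₂]
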